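/- The four vector fields u₁ = −t ∂/∂t + q₁ ∂/∂q₁ + q₂ ∂/∂q₂ + q₃ ∂/∂q₃, u₂ = ∂/∂t, u₃ = ∂/∂q₃, u₄ = q₂ ∂/∂q₁ − q₁ ∂/∂q₂ on ℝ × ℝ³ (coordinates t, q₁, q₂, q₃) span a 4-dimensional Lie algebra with brackets [u₁,u₂] = u₂, [u₁,u₃] = −u₃, and all other brackets of basis elements zero. This Lie algebra is isomorphic to the matrix Lie algebra of 4×4 matrices of the form with first row (0, d, b, c), second row zero, third row (0,0,−a,0), fourth row (0,0,0,a), a,b,c,d ∈ ℝ, under the commutator bracket. -/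

import Mathlib

open scoped BigOperators

/-- The four symmetry vector fields on ℝ × ℝ³ (coordinates `u 0 = t`,
`u 1 = q₁`, `u 2 = q₂`, `u 3 = q₃`):
`u₁ = −t∂ₜ + q₁∂₁ + q₂∂₂ + q₃∂₃`, `u₂ = ∂ₜ`, `u₃ = ∂₃`, `u₄ = q₂∂₁ − q₁∂₂`. -/
noncomputable def symVF : Fin 4 → ((Fin 4 → ℝ) → (Fin 4 → ℝ))
  | 0 => fun u => ![-u 0, u 1, u 2, u 3]
  | 1 => fun _ => ![1, 0, 0, 0]
  | 2 => fun _ => ![0, 0, 0, 1]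
  | 3 => fun u => ![0, u 2, -u 1, 0]

/-- The Lie bracket of vector fields on ℝ⁴:
`[X,Y] = DY·X − DX·Y`, corresponding to `[X,Y]f = X(Yf) − Y(Xf)`. -/
noncomputable def vfBracket (X Y : (Fin 4 → ℝ) → (Fin 4 → ℝ)) :
    (Fin 4 → ℝ) → (Fin 4 → ℝ) :=
  fun u => fderiv ℝ Y u (X u) - fderiv ℝ X u (Y u)

/-- The matrix Lie algebra basis: `A a b c d` has first row `(0,d,b,c)`,
zero second row, third row `(0,0,−a,0)`, fourth row `(0,0,0,a)`. -/
noncomputable def symMat : Fin 4 → Matrix (Fin 4) (Fin 4) ℝ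
  | 0 => !![0, 0, 0, 0; 0, 0, 0, 0; 0, 0, -1, 0; 0, 0, 0, 1]
  | 1 => !![0, 0, 1, 0; 0, 0, 0, 0; 0, 0, 0, 0; 0, 0, 0, 0]
  | 2 => !![0, 0, 0, 1; 0, 0, 0, 0; 0, 0, 0, 0; 0, 0, 0, 0]
  | 3 => !![0, 1, 0, 0; 0, 0, 0, 0; 0, 0, 0, 0; 0, 0, 0, 0]

noncomputable def clmOf (M : Matrix (Fin 4) (Fin 4) ℝ) : (Fin 4 → ℝ) →L[ℝ] (Fin 4 → ℝ) :=
  (Matrix.mulVecLin M).toContinuousLinearMap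

def M0 : Matrix (Fin 4) (Fin 4) ℝ := !![-1,0,0,0; 0,1,0,0; 0,0,1,0; 0,0,0,1]
def M3 : Matrix (Fin 4) (Fin 4) ℝ := !![0,0,0,0; 0,0,1,0; 0,-1,0,0; 0,0,0,0]

lemma hVF0 : symVF 0 = ⇑(clmOf M0) := by
  funext u; ext i
  fin_cases i <;>
    simp [symVF, clmOf, M0, Matrix.mulVec, dotProduct, Fin.sum_univ_four]

lemma hVF3 : symVF 3 = ⇑(clmOf M3) := by
  funext u; ext i
  fin_cases i <;>
    simp [symVF, clmOf, M3, Matrix.mulVec, dotProduct, Fin.sum_univ_four]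

lemma fd0 (u : Fin 4 → ℝ) :
    fderiv ℝ (fun u : Fin 4 → ℝ => ![-u 0, u 1, u 2, u 3]) u = clmOf M0 := by
  have : (fun u : Fin 4 → ℝ => ![-u 0, u 1, u 2, u 3]) = symVF 0 := rfl
  rw [this, hVF0, ContinuousLinearMap.fderiv]
lemma fd3 (u : Fin 4 → ℝ) :
    fderiv ℝ (fun u : Fin 4 → ℝ => ![0, u 2, -u 1, 0]) u = clmOf M3 := by
  have : (fun u : Fin 4 → ℝ => ![0, u 2, -u 1, 0]) = symVF 3 := rfl
  rw [this, hVF3, ContinuousLinearMap.fderiv]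
lemma fd1 (u : Fin 4 → ℝ) :
    fderiv ℝ (fun _ : Fin 4 → ℝ => ![(1:ℝ), 0, 0, 0]) u = 0 :=
  fderiv_const_apply _
lemma fd2 (u : Fin 4 → ℝ) :
    fderiv ℝ (fun _ : Fin 4 → ℝ => ![(0:ℝ), 0, 0, 1]) u = 0 :=
  fderiv_const_apply _

noncomputable def cst : Fin 4 → Fin 4 → Fin 4 → ℝ :=
  ![![![0,0,0,0], ![0,1,0,0], ![0,0,-1,0], ![0,0,0,0]],
    ![![0,-1,0,0], ![0,0,0,0], ![0,0,0,0], ![0,0,0,0]],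
    ![![0,0,1,0], ![0,0,0,0], ![0,0,0,0], ![0,0,0,0]],
    ![![0,0,0,0], ![0,0,0,0], ![0,0,0,0], ![0,0,0,0]]]

lemma br00 : vfBracket (symVF 0) (symVF 0) = ∑ k : Fin 4, cst 0 0 k • symVF k := by
  funext u
  simp only [vfBracket, symVF, fd0, fd1, fd2, fd3]
  ext m
  fin_cases m <;>
    simp [clmOf, cst, M0, M3, symVF, Matrix.mulVec, dotProduct, Fin.sum_univ_four, Matrix.vecHead, Matrix.vecTail]

lemma mb00 : symMat 0 * symMat 0 - symMat 0 * symMat 0 = ∑ k : Fin 4, cst 0 0 k • symMat k := by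
  ext a b
  fin_cases a <;> fin_cases b <;>
    simp [symMat, cst, Matrix.mul_apply, Fin.sum_univ_four, Matrix.vecHead, Matrix.vecTail]

lemma br01 : vfBracket (symVF 0) (symVF 1) = ∑ k : Fin 4, cst 0 1 k • symVF k := by
  funext u
  simp only [vfBracket, symVF, fd0, fd1, fd2, fd3]
  ext m
  fin_cases m <;>
    simp [clmOf, cst, M0, M3, symVF, Matrix.mulVec, dotProduct, Fin.sum_univ_four, Matrix.vecHead, Matrix.vecTail]

lemma mb01 : symMat 0 * symMat 1 - symMat 1 * symMat 0 = ∑ k : Fin 4, cst 0 1 k • symMat k := by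
  ext a b
  fin_cases a <;> fin_cases b <;>
    simp [symMat, cst, Matrix.mul_apply, Fin.sum_univ_four, Matrix.vecHead, Matrix.vecTail]

lemma br02 : vfBracket (symVF 0) (symVF 2) = ∑ k : Fin 4, cst 0 2 k • symVF k := by
  funext u
  simp only [vfBracket, symVF, fd0, fd1, fd2, fd3]
  ext m
  fin_cases m <;>
    simp [clmOf, cst, M0, M3, symVF, Matrix.mulVec, dotProduct, Fin.sum_univ_four, Matrix.vecHead, Matrix.vecTail]

lemma mb02 : symMat 0 * symMat 2 - symMat 2 * symMat 0 = ∑ k : Fin 4, cst 0 2 k • symMat k := by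
  ext a b
  fin_cases a <;> fin_cases b <;>
    simp [symMat, cst, Matrix.mul_apply, Fin.sum_univ_four, Matrix.vecHead, Matrix.vecTail]

lemma br03 : vfBracket (symVF 0) (symVF 3) = ∑ k : Fin 4, cst 0 3 k • symVF k := by
  funext u
  simp only [vfBracket, symVF, fd0, fd1, fd2, fd3]
  ext m
  fin_cases m <;>
    simp [clmOf, cst, M0, M3, symVF, Matrix.mulVec, dotProduct, Fin.sum_univ_four, Matrix.vecHead, Matrix.vecTail]

lemma mb03 : symMat 0 * symMat 3 - symMat 3 * symMat 0 = ∑ k : Fin 4, cst 0 3 k • symMat k := by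
  ext a b
  fin_cases a <;> fin_cases b <;>
    simp [symMat, cst, Matrix.mul_apply, Fin.sum_univ_four, Matrix.vecHead, Matrix.vecTail]

lemma br10 : vfBracket (symVF 1) (symVF 0) = ∑ k : Fin 4, cst 1 0 k • symVF k := by
  funext u
  simp only [vfBracket, symVF, fd0, fd1, fd2, fd3]
  ext m
  fin_cases m <;>
    simp [clmOf, cst, M0, M3, symVF, Matrix.mulVec, dotProduct, Fin.sum_univ_four, Matrix.vecHead, Matrix.vecTail]

lemma mb10 : symMat 1 * symMat 0 - symMat 0 * symMat 1 = ∑ k : Fin 4, cst 1 0 k • symMat k := by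
  ext a b
  fin_cases a <;> fin_cases b <;>
    simp [symMat, cst, Matrix.mul_apply, Fin.sum_univ_four, Matrix.vecHead, Matrix.vecTail]

lemma br11 : vfBracket (symVF 1) (symVF 1) = ∑ k : Fin 4, cst 1 1 k • symVF k := by
  funext u
  simp only [vfBracket, symVF, fd0, fd1, fd2, fd3]
  ext m
  fin_cases m <;>
    simp [clmOf, cst, M0, M3, symVF, Matrix.mulVec, dotProduct, Fin.sum_univ_four, Matrix.vecHead, Matrix.vecTail]

lemma mb11 : symMat 1 * symMat 1 - symMat 1 * symMat 1 = ∑ k : Fin 4, cst 1 1 k • symMat k := by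
  ext a b
  fin_cases a <;> fin_cases b <;>
    simp [symMat, cst, Matrix.mul_apply, Fin.sum_univ_four, Matrix.vecHead, Matrix.vecTail]

lemma br12 : vfBracket (symVF 1) (symVF 2) = ∑ k : Fin 4, cst 1 2 k • symVF k := by
  funext u
  simp only [vfBracket, symVF, fd0, fd1, fd2, fd3]
  ext m
  fin_cases m <;>
    simp [clmOf, cst, M0, M3, symVF, Matrix.mulVec, dotProduct, Fin.sum_univ_four, Matrix.vecHead, Matrix.vecTail]

lemma mb12 : symMat 1 * symMat 2 - symMat 2 * symMat 1 = ∑ k : Fin 4, cst 1 2 k • symMat k := by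
  ext a b
  fin_cases a <;> fin_cases b <;>
    simp [symMat, cst, Matrix.mul_apply, Fin.sum_univ_four, Matrix.vecHead, Matrix.vecTail]

lemma br13 : vfBracket (symVF 1) (symVF 3) = ∑ k : Fin 4, cst 1 3 k • symVF k := by
  funext u
  simp only [vfBracket, symVF, fd0, fd1, fd2, fd3]
  ext m
  fin_cases m <;>
    simp [clmOf, cst, M0, M3, symVF, Matrix.mulVec, dotProduct, Fin.sum_univ_four, Matrix.vecHead, Matrix.vecTail]

lemma mb13 : symMat 1 * symMat 3 - symMat 3 * symMat 1 = ∑ k : Fin 4, cst 1 3 k • symMat k := by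
  ext a b
  fin_cases a <;> fin_cases b <;>
    simp [symMat, cst, Matrix.mul_apply, Fin.sum_univ_four, Matrix.vecHead, Matrix.vecTail]

lemma br20 : vfBracket (symVF 2) (symVF 0) = ∑ k : Fin 4, cst 2 0 k • symVF k := by
  funext u
  simp only [vfBracket, symVF, fd0, fd1, fd2, fd3]
  ext m
  fin_cases m <;>
    simp [clmOf, cst, M0, M3, symVF, Matrix.mulVec, dotProduct, Fin.sum_univ_four, Matrix.vecHead, Matrix.vecTail]

lemma mb20 : symMat 2 * symMat 0 - symMat 0 * symMat 2 = ∑ k : Fin 4, cst 2 0 k • symMat k := by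
  ext a b
  fin_cases a <;> fin_cases b <;>
    simp [symMat, cst, Matrix.mul_apply, Fin.sum_univ_four, Matrix.vecHead, Matrix.vecTail]

lemma br21 : vfBracket (symVF 2) (symVF 1) = ∑ k : Fin 4, cst 2 1 k • symVF k := by
  funext u
  simp only [vfBracket, symVF, fd0, fd1, fd2, fd3]
  ext m
  fin_cases m <;>
    simp [clmOf, cst, M0, M3, symVF, Matrix.mulVec, dotProduct, Fin.sum_univ_four, Matrix.vecHead, Matrix.vecTail]

lemma mb21 : symMat 2 * symMat 1 - symMat 1 * symMat 2 = ∑ k : Fin 4, cst 2 1 k • symMat k := by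
  ext a b
  fin_cases a <;> fin_cases b <;>
    simp [symMat, cst, Matrix.mul_apply, Fin.sum_univ_four, Matrix.vecHead, Matrix.vecTail]

lemma br22 : vfBracket (symVF 2) (symVF 2) = ∑ k : Fin 4, cst 2 2 k • symVF k := by
  funext u
  simp only [vfBracket, symVF, fd0, fd1, fd2, fd3]
  ext m
  fin_cases m <;>
    simp [clmOf, cst, M0, M3, symVF, Matrix.mulVec, dotProduct, Fin.sum_univ_four, Matrix.vecHead, Matrix.vecTail]

lemma mb22 : symMat 2 * symMat 2 - symMat 2 * symMat 2 = ∑ k : Fin 4, cst 2 2 k • symMat k := by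
  ext a b
  fin_cases a <;> fin_cases b <;>
    simp [symMat, cst, Matrix.mul_apply, Fin.sum_univ_four, Matrix.vecHead, Matrix.vecTail]

lemma br23 : vfBracket (symVF 2) (symVF 3) = ∑ k : Fin 4, cst 2 3 k • symVF k := by
  funext u
  simp only [vfBracket, symVF, fd0, fd1, fd2, fd3]
  ext m
  fin_cases m <;>
    simp [clmOf, cst, M0, M3, symVF, Matrix.mulVec, dotProduct, Fin.sum_univ_four, Matrix.vecHead, Matrix.vecTail]

lemma mb23 : symMat 2 * symMat 3 - symMat 3 * symMat 2 = ∑ k : Fin 4, cst 2 3 k • symMat k := by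
  ext a b
  fin_cases a <;> fin_cases b <;>
    simp [symMat, cst, Matrix.mul_apply, Fin.sum_univ_four, Matrix.vecHead, Matrix.vecTail]

lemma br30 : vfBracket (symVF 3) (symVF 0) = ∑ k : Fin 4, cst 3 0 k • symVF k := by
  funext u
  simp only [vfBracket, symVF, fd0, fd1, fd2, fd3]
  ext m
  fin_cases m <;>
    simp [clmOf, cst, M0, M3, symVF, Matrix.mulVec, dotProduct, Fin.sum_univ_four, Matrix.vecHead, Matrix.vecTail]

lemma mb30 : symMat 3 * symMat 0 - symMat 0 * symMat 3 = ∑ k : Fin 4, cst 3 0 k • symMat k := by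
  ext a b
  fin_cases a <;> fin_cases b <;>
    simp [symMat, cst, Matrix.mul_apply, Fin.sum_univ_four, Matrix.vecHead, Matrix.vecTail]

lemma br31 : vfBracket (symVF 3) (symVF 1) = ∑ k : Fin 4, cst 3 1 k • symVF k := by
  funext u
  simp only [vfBracket, symVF, fd0, fd1, fd2, fd3]
  ext m
  fin_cases m <;>
    simp [clmOf, cst, M0, M3, symVF, Matrix.mulVec, dotProduct, Fin.sum_univ_four, Matrix.vecHead, Matrix.vecTail]

lemma mb31 : symMat 3 * symMat 1 - symMat 1 * symMat 3 = ∑ k : Fin 4, cst 3 1 k • symMat k := by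
  ext a b
  fin_cases a <;> fin_cases b <;>
    simp [symMat, cst, Matrix.mul_apply, Fin.sum_univ_four, Matrix.vecHead, Matrix.vecTail]

lemma br32 : vfBracket (symVF 3) (symVF 2) = ∑ k : Fin 4, cst 3 2 k • symVF k := by
  funext u
  simp only [vfBracket, symVF, fd0, fd1, fd2, fd3]
  ext m
  fin_cases m <;>
    simp [clmOf, cst, M0, M3, symVF, Matrix.mulVec, dotProduct, Fin.sum_univ_four, Matrix.vecHead, Matrix.vecTail]

lemma mb32 : symMat 3 * symMat 2 - symMat 2 * symMat 3 = ∑ k : Fin 4, cst 3 2 k • symMat k := by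
  ext a b
  fin_cases a <;> fin_cases b <;>
    simp [symMat, cst, Matrix.mul_apply, Fin.sum_univ_four, Matrix.vecHead, Matrix.vecTail]

lemma br33 : vfBracket (symVF 3) (symVF 3) = ∑ k : Fin 4, cst 3 3 k • symVF k := by
  funext u
  simp only [vfBracket, symVF, fd0, fd1, fd2, fd3]
  ext m
  fin_cases m <;>
    simp [clmOf, cst, M0, M3, symVF, Matrix.mulVec, dotProduct, Fin.sum_univ_four, Matrix.vecHead, Matrix.vecTail]

lemma mb33 : symMat 3 * symMat 3 - symMat 3 * symMat 3 = ∑ k : Fin 4, cst 3 3 k • symMat k := by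
  ext a b
  fin_cases a <;> fin_cases b <;>
    simp [symMat, cst, Matrix.mul_apply, Fin.sum_univ_four, Matrix.vecHead, Matrix.vecTail]

set_option maxHeartbeats 1000000 in
/-- The vector fields `u₁,…,u₄` are linearly independent and close into a
4-dimensional Lie algebra with brackets `[u₁,u₂] = u₂`, `[u₁,u₃] = −u₃` and all
other brackets zero; the matrices `A₁,…,A₄` are linearly independent and satisfy
the same structure constants under the commutator, so the two Lie algebras are
isomorphic via `uᵢ ↦ Aᵢ`. -/
theorem symmetry_algebra_isomorphic :
    LinearIndependent ℝ symVF ∧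
    LinearIndependent ℝ symMat ∧
    ∃ c : Fin 4 → Fin 4 → Fin 4 → ℝ,
      (∀ i j, vfBracket (symVF i) (symVF j) = ∑ k : Fin 4, c i j k • symVF k) ∧
      (∀ i j, symMat i * symMat j - symMat j * symMat i
          = ∑ k : Fin 4, c i j k • symMat k) ∧
      c 0 1 = ![0, 1, 0, 0] ∧ c 0 2 = ![0, 0, -1, 0] ∧
      c 0 3 = 0 ∧ c 1 2 = 0 ∧ c 1 3 = 0 ∧ c 2 3 = 0 := by
  refine ⟨?_, ?_, cst, ?_, ?_, rfl, rfl, ?_, ?_, ?_, ?_⟩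
  · rw [Fintype.linearIndependent_iff]
    intro g hg
    have h1 := congrFun (congrFun hg ![0,0,0,0]) 0
    have h2 := congrFun (congrFun hg ![0,0,0,0]) 3
    have h3 := congrFun (congrFun hg ![0,1,0,0]) 1
    have h4 := congrFun (congrFun hg ![0,1,0,0]) 2
    simp [Fin.sum_univ_four, symVF] at h1 h2 h3 h4
    intro i; fin_cases i <;> simp_all
  · rw [Fintype.linearIndependent_iff]
    intro g hg
    have h1 := congrFun (congrFun hg 2) 2
    have h2 := congrFun (congrFun hg 0) 2
    have h3 := congrFun (congrFun hg 0) 3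
    have h4 := congrFun (congrFun hg 0) 1
    simp [Fin.sum_univ_four, symMat, Matrix.vecHead, Matrix.vecTail] at h1 h2 h3 h4
    intro i; fin_cases i <;> simp_all
  · intro i j
    fin_cases i <;> fin_cases j
    · exact br00
    · exact br01
    · exact br02
    · exact br03
    · exact br10
    · exact br11
    · exact br12
    · exact br13
    · exact br20
    · exact br21
    · exact br22
    · exact br23
    · exact br30
    · exact br31
    · exact br32
    · exact br33
  · intro i j
    fin_cases i <;> fin_cases j
    · exact mb00
    · exact mb01
    · exact mb02
    · exact mb03
    · exact mb10
    · exact mb11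
    · exact mb12
    · exact mb13
    · exact mb20
    · exact mb21
    · exact mb22
    · exact mb23
    · exact mb30
    · exact mb31
    · exact mb32
    · exact mb33
  all_goals
    funext k
    fin_cases k <;> norm_num [cst, Matrix.vecHead, Matrix.vecTail] <;> rfl
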